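/- For every nonnegative 1-Lipschitz function Φ: ℂ → ℝ and all x ≠ y, the gradient in x of the suppressed kernel k_Φ(x,y) = conj(x−y)/(|x−y|² + Φ(x)Φ(y)) is bounded in norm by 4/|x−y|². -/

import Mathlib

open Complex

/-- For a nonnegative 1-Lipschitz function `Φ : ℂ → ℝ` and `x ≠ y`, the gradient in `x`
of the suppressed kernel `k_Φ(x,y) = conj(x-y)/(|x-y|² + Φ(x)Φ(y))` is bounded in norm
by `4 / |x-y|²`. -/
theorem suppressed_kernel_gradient_bound
    (Φ : ℂ → ℝ) (hΦ0 : ∀ x, 0 ≤ Φ x)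
    (hΦlip : ∀ x y : ℂ, |Φ x - Φ y| ≤ ‖x - y‖) :
    ∀ x y : ℂ, x ≠ y →
      ‖fderiv ℝ (fun z : ℂ =>
          (starRingEnd ℂ) (z - y) /
            ((‖z - y‖ ^ 2 + Φ z * Φ y : ℝ) : ℂ)) x‖ ≤
        4 / (‖x - y‖) ^ 2 := by
  intro x y hxy
  set f : ℂ → ℂ := fun z =>
      (starRingEnd ℂ) (z - y) / ((‖z - y‖ ^ 2 + Φ z * Φ y : ℝ) : ℂ) with hf
  set a : ℝ := ‖x - y‖ with ha
  have ha0 : 0 < a := by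
    simpa [ha] using (norm_pos_iff.mpr (sub_ne_zero.mpr hxy))
  by_cases hdiff : DifferentiableAt ℝ f x
  · set D : ℂ → ℝ := fun z => ‖z - y‖ ^ 2 + Φ z * Φ y with hD
    have hDx : 0 < D x := by
      have h1 := mul_nonneg (hΦ0 x) (hΦ0 y)
      have : D x = a ^ 2 + Φ x * Φ y := by simp [hD, ha]
      nlinarith
    have hDxa : a ^ 2 ≤ D x := by
      have h1 := mul_nonneg (hΦ0 x) (hΦ0 y)
      have : D x = a ^ 2 + Φ x * Φ y := by simp [hD, ha]
      nlinarith
    have haΦ : a * Φ y ≤ D x := by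
      have hL : Φ y - Φ x ≤ a := by
        have h := hΦlip y x
        rw [norm_sub_rev, ← ha] at h
        exact (le_abs_self _).trans h
      have h2 : 0 ≤ Φ y * (Φ x - Φ y + a) := mul_nonneg (hΦ0 y) (by linarith)
      have : D x = a ^ 2 + Φ x * Φ y := by simp [hD, ha]
      nlinarith [sq_nonneg (a - Φ y)]
    have hΦc : Continuous Φ := by
      have : LipschitzWith 1 Φ := by
        apply LipschitzWith.of_dist_le_mul
        intro u v
        rw [Real.dist_eq, Complex.dist_eq]
        simpa using hΦlip u v
      exact this.continuous
    have hDc : Continuous D := by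
      apply Continuous.add
      · exact (continuous_norm.comp (continuous_id.sub continuous_const)).pow 2
      · exact hΦc.mul continuous_const
    -- the local Lipschitz quotient function
    set g : ℂ → ℝ := fun z =>
      (D x + a * (‖z - y‖ + a + Φ y)) / (D z * D x) with hg
    have hgcont : ContinuousAt g x := by
      apply ContinuousAt.div
      · exact (continuous_const.add (continuous_const.mul
          (((continuous_norm.comp (continuous_id.sub continuous_const)).add
            continuous_const).add continuous_const))).continuousAt
      · exact ((hDc.mul continuous_const).continuousAt)
      · positivity
    have hgx : g x ≤ 4 / a ^ 2 := by
      have : g x = (D x + a * (a + a + Φ y)) / (D x * D x) := by simp [hg, ha]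
      rw [this, div_le_div_iff₀ (by positivity) (by positivity)]
      have h1 : a ^ 2 * D x ≤ D x * D x := mul_le_mul_of_nonneg_right hDxa hDx.le
      have h2 : a ^ 2 * a ^ 2 ≤ D x * D x := mul_le_mul hDxa hDxa (sq_nonneg a) hDx.le
      have h3 : (a * Φ y) * a ^ 2 ≤ D x * D x := mul_le_mul haΦ hDxa (sq_nonneg a) hDx.le
      nlinarith
    -- pointwise estimate
    have hpt : ∀ z : ℂ, z ≠ y → ‖f z - f x‖ ≤ g z * ‖z - x‖ := by
      intro z hzy
      have hDz : 0 < D z := by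
        have h1 := mul_nonneg (hΦ0 z) (hΦ0 y)
        have h2 : 0 < ‖z - y‖ := norm_pos_iff.mpr (sub_ne_zero.mpr hzy)
        simp only [hD]
        nlinarith
      have hDzC : ((D z : ℝ) : ℂ) ≠ 0 := by exact_mod_cast hDz.ne'
      have hDxC : ((D x : ℝ) : ℂ) ≠ 0 := by exact_mod_cast hDx.ne'
      have hfz : f z - f x = ((starRingEnd ℂ) (z - y) * (D x : ℂ) -
          (D z : ℂ) * (starRingEnd ℂ) (x - y)) / ((D z : ℂ) * (D x : ℂ)) := by
        simp only [hf, hD]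
        rw [div_sub_div _ _ hDzC hDxC]
      have hnum : (starRingEnd ℂ) (z - y) * (D x : ℂ) - (D z : ℂ) * (starRingEnd ℂ) (x - y)
          = (starRingEnd ℂ) (z - x) * (D x : ℂ) +
            (starRingEnd ℂ) (x - y) * (((D x : ℝ) : ℂ) - ((D z : ℝ) : ℂ)) := by
        simp only [map_sub]; ring
      have hDdiff : |D x - D z| ≤ (‖z - y‖ + a + Φ y) * ‖z - x‖ := by
        set b : ℝ := ‖z - y‖ with hb
        have hb0 : 0 ≤ b := norm_nonneg _
        have habs : |a - b| ≤ ‖z - x‖ := by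
          have := abs_norm_sub_norm_le (x - y) (z - y)
          simpa [ha, hb, sub_sub_sub_cancel_right, norm_sub_rev] using this
        have hΦd : |Φ x - Φ z| ≤ ‖z - x‖ := by
          have := hΦlip x z
          rwa [norm_sub_rev] at this
        have h1 : |a ^ 2 - b ^ 2| ≤ (a + b) * ‖z - x‖ := by
          have e : a ^ 2 - b ^ 2 = (a - b) * (a + b) := by ring
          rw [e, abs_mul, _root_.abs_of_nonneg (by linarith : (0:ℝ) ≤ a + b)]
          rw [mul_comm ((a+b)) _]
          exact mul_le_mul_of_nonneg_right habs (by linarith)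
        have h2 : |(Φ x - Φ z) * Φ y| ≤ Φ y * ‖z - x‖ := by
          rw [abs_mul, _root_.abs_of_nonneg (hΦ0 y), mul_comm]
          exact mul_le_mul_of_nonneg_left hΦd (hΦ0 y)
        have e2 : D x - D z = (a ^ 2 - b ^ 2) + (Φ x - Φ z) * Φ y := by
          simp only [hD, ha, hb]; ring
        calc |D x - D z| ≤ |a ^ 2 - b ^ 2| + |(Φ x - Φ z) * Φ y| := by
              rw [e2]; exact abs_add_le _ _
          _ ≤ (a + b) * ‖z - x‖ + Φ y * ‖z - x‖ := add_le_add h1 h2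
          _ = (b + a + Φ y) * ‖z - x‖ := by ring
      have hnumle : ‖(starRingEnd ℂ) (z - y) * (D x : ℂ) -
            (D z : ℂ) * (starRingEnd ℂ) (x - y)‖ ≤
          (D x + a * (‖z - y‖ + a + Φ y)) * ‖z - x‖ := by
        rw [hnum]
        calc ‖_‖ ≤ ‖(starRingEnd ℂ) (z - x) * (D x : ℂ)‖ +
              ‖(starRingEnd ℂ) (x - y) * (((D x : ℝ) : ℂ) - ((D z : ℝ) : ℂ))‖ :=
              norm_add_le _ _
          _ = ‖z - x‖ * D x + a * |D x - D z| := by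
              rw [norm_mul, norm_mul, Complex.norm_conj, Complex.norm_conj,
                ← Complex.ofReal_sub, Complex.norm_real, Complex.norm_real, Real.norm_eq_abs, Real.norm_eq_abs,
                _root_.abs_of_pos hDx, ← ha]
          _ ≤ ‖z - x‖ * D x +
              a * ((‖z - y‖ + a + Φ y) * ‖z - x‖) := by
              have := mul_le_mul_of_nonneg_left hDdiff ha0.le
              linarith
          _ = (D x + a * (‖z - y‖ + a + Φ y)) * ‖z - x‖ := by ring
      rw [hfz]
      rw [norm_div, norm_mul]
      rw [Complex.norm_real, Complex.norm_real, Real.norm_eq_abs, Real.norm_eq_abs, abs_of_pos hDz, abs_of_pos hDx]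
      have hgz : g z * ‖z - x‖ = ((D x + a * (‖z - y‖ + a + Φ y)) *
          ‖z - x‖) / (D z * D x) := by
        rw [hg]; ring
      rw [hgz]
      exact div_le_div_of_nonneg_right hnumle (by positivity) |>.trans_eq rfl
    -- conclude
    apply le_of_forall_pos_le_add
    intro ε hε
    have hC : (0:ℝ) ≤ 4 / a ^ 2 + ε := by positivity
    apply hdiff.hasFDerivAt.le_of_lip' hC
    have hev1 : ∀ᶠ z in nhds x, z ≠ y := eventually_ne_nhds hxy
    have hgx' : g x < 4 / a ^ 2 + ε := lt_of_le_of_lt hgx (by linarith)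
    have hev2 : ∀ᶠ z in nhds x, g z < 4 / a ^ 2 + ε :=
      hgcont.eventually_lt_const hgx'
    filter_upwards [hev1, hev2] with z hz1 hz2
    calc ‖f z - f x‖ ≤ g z * ‖z - x‖ := hpt z hz1
      _ ≤ (4 / a ^ 2 + ε) * ‖z - x‖ :=
          mul_le_mul_of_nonneg_right hz2.le (norm_nonneg _)
  · rw [fderiv_zero_of_not_differentiableAt hdiff]
    simp only [norm_zero]
    positivity
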